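/- With S, ℓ, Occ, and S_w as above, suppose I is the set of positions in S_w corresponding to occurrences i ∈ Occ(w) with ℓ(i) ∈ [a,b]; then I is a contiguous interval of S_w. Moreover, for a character c, the occurrences of c within the interval I of S_w form a contiguous range of the occurrences of c in S_w, and its cardinality equals |{i ∈ Occ(w·c) : ℓ(i) ∈ [a,b]}|, assuming every occurrence of w·c in S is an occurrence of w followed by c. -/

import Mathlib

def occursAt {α : Type*} (S P : List α) (i : ℕ) : Prop := P <+: S.drop i

instance {α : Type*} [DecidableEq α] (S P : List α) (i : ℕ) : Decidable (occursAt S P i) :=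
  inferInstanceAs (Decidable (P <+: S.drop i))

/-- The starting positions of occurrences of `w` in `S`, stably sorted by label. -/
def sortedOcc {α : Type*} [DecidableEq α] (S : List α) (ℓ : ℕ → ℕ) (w : List α) : List ℕ :=
  ((List.range S.length).filter (fun i => decide (occursAt S w i))).mergeSort
    (fun i j => decide (ℓ i < ℓ j ∨ (ℓ i = ℓ j ∧ i ≤ j)))

/-- `S_w`: the characters following occurrences of `w` in `S` (the sentinel `d` when the
occurrence reaches the end of `S`), listed sorted by the labels of those occurrences. -/
def Sw {α : Type*} [DecidableEq α] (S : List α) (ℓ : ℕ → ℕ) (d : α) (w : List α) : List α :=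
  (sortedOcc S ℓ w).map (fun i => S.getD (i + w.length) d)

lemma filter_lt_take (hi : ℕ) : ∀ (A : List ℕ), A.Pairwise (· ≤ ·) →
    ∃ r, A.filter (fun k => decide (k < hi)) = A.take r := by
  intro A hA
  induction A with
  | nil => exact ⟨0, rfl⟩
  | cons x t ih =>
    obtain ⟨hx, ht⟩ := List.pairwise_cons.1 hA
    by_cases h : x < hi
    · obtain ⟨r, hr⟩ := ih ht
      exact ⟨r + 1, by simp [List.filter_cons, h, hr]⟩
    · refine ⟨0, ?_⟩
      simp only [List.take_zero]
      rw [List.filter_cons_of_neg (by simpa using h)]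
      rw [List.filter_eq_nil_iff]
      intro y hy
      have := hx y hy
      simp only [decide_eq_true_eq]
      omega

lemma filter_ge_drop (lo : ℕ) : ∀ (A : List ℕ), A.Pairwise (· ≤ ·) →
    ∃ r, A.filter (fun k => decide (lo ≤ k)) = A.drop r := by
  intro A hA
  induction A with
  | nil => exact ⟨0, rfl⟩
  | cons x t ih =>
    obtain ⟨hx, ht⟩ := List.pairwise_cons.1 hA
    by_cases h : lo ≤ x
    · refine ⟨0, ?_⟩
      simp only [List.drop_zero]
      rw [List.filter_cons_of_pos (by simpa using h)]
      congr 1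
      rw [List.filter_eq_self]
      intro y hy
      have := hx y hy
      simp only [decide_eq_true_eq]
      omega
    · obtain ⟨r, hr⟩ := ih ht
      refine ⟨r + 1, ?_⟩
      rw [List.filter_cons_of_neg (by simpa using h), hr]
      rfl

lemma occursAt_append_singleton {α : Type*} (S w : List α) (c : α) (i : ℕ) :
    occursAt S (w ++ [c]) i ↔ occursAt S w i ∧
      ∃ h : i + w.length < S.length, S[i + w.length] = c := by
  constructor
  · intro h
    have hw : w <+: S.drop i := (List.prefix_append w [c]).trans h
    have h2 : [c] <+: S.drop (i + w.length) := by
      have := h.drop w.length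
      rwa [List.drop_left, List.drop_drop] at this
    obtain ⟨t, ht⟩ := h2
    have : S[i + w.length]? = some c := by
      have h0 : (S.drop (i + w.length))[0]? = some c := by rw [← ht]; simp
      rwa [List.getElem?_drop, Nat.add_zero] at h0
    obtain ⟨hb, hv⟩ := List.getElem?_eq_some_iff.1 this
    exact ⟨hw, hb, hv⟩
  · rintro ⟨hw, hb, hv⟩
    obtain ⟨t, ht⟩ := hw
    have ht' : t = S.drop (i + w.length) := by
      have := congrArg (List.drop w.length) ht
      rwa [List.drop_left, List.drop_drop] at this
    have hd : S.drop (i + w.length) = c :: S.drop (i + w.length + 1) := by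
      rw [List.drop_eq_getElem_cons hb, hv]
    refine ⟨S.drop (i + w.length + 1), ?_⟩
    rw [← ht, ht', hd, List.append_assoc]
    rfl

/-- the positions of `S_w` coming from occurrences of `w` with label in `[a,b]`
form a contiguous interval `[lo,hi)`; the occurrences of `c` inside this interval form a
contiguous range of all occurrences of `c` in `S_w`, and their number is the number of
occurrences of `w·c` in `S` whose first character'"'"'s label lies in `[a,b]`. -/
theorem stmt6 {α : Type*} [DecidableEq α] (S : List α) (ℓ : ℕ → ℕ) (d : α)
    (w : List α) (c : α) (a b : ℕ) (hc : c ≠ d) :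
    ∃ lo hi : ℕ,
      (Finset.range (sortedOcc S ℓ w).length).filter
          (fun k => a ≤ ℓ ((sortedOcc S ℓ w).getD k 0) ∧ ℓ ((sortedOcc S ℓ w).getD k 0) ≤ b)
        = Finset.Ico lo hi
      ∧ (∃ r₁ r₂ : ℕ,
          ((List.range (Sw S ℓ d w).length).filter
              (fun k => decide ((Sw S ℓ d w).getD k d = c ∧ lo ≤ k ∧ k < hi)))
            = (((List.range (Sw S ℓ d w).length).filter
                (fun k => decide ((Sw S ℓ d w).getD k d = c))).drop r₁).take r₂)
      ∧ ((Finset.Ico lo hi).filter (fun k => (Sw S ℓ d w).getD k d = c)).card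
          = ((Finset.range S.length).filter
              (fun i => occursAt S (w ++ [c]) i ∧ a ≤ ℓ i ∧ ℓ i ≤ b)).card := by
  classical
  set L := sortedOcc S ℓ w with hL
  set n := L.length with hn
  -- sortedness
  have hsorted : L.Pairwise (fun i j => ℓ i < ℓ j ∨ (ℓ i = ℓ j ∧ i ≤ j)) := by
    have := List.pairwise_mergeSort
      (le := fun i j => decide (ℓ i < ℓ j ∨ (ℓ i = ℓ j ∧ i ≤ j)))
      (by intro x y z hxy hyz; simp only [decide_eq_true_eq] at *; omega)
      (by intro x y; simp only [Bool.or_eq_true, decide_eq_true_eq]; omega)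
      ((List.range S.length).filter (fun i => decide (occursAt S w i)))
    simp only [decide_eq_true_eq] at this
    exact this
  have hmono : ∀ {k₁ k₂ : ℕ}, k₁ ≤ k₂ → k₂ < n → ℓ (L.getD k₁ 0) ≤ ℓ (L.getD k₂ 0) := by
    intro k₁ k₂ h12 h2
    rcases Nat.eq_or_lt_of_le h12 with rfl | hlt
    · exact le_refl _
    · have h1 : k₁ < n := lt_trans hlt h2
      rw [List.getD_eq_getElem _ _ h1, List.getD_eq_getElem _ _ h2]
      have := List.pairwise_iff_getElem.1 hsorted k₁ k₂ h1 h2 hlt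
      omega
  -- lo and hi
  have hQex : ∃ k, ¬ (k < n ∧ ℓ (L.getD k 0) < a) := ⟨n, by simp⟩
  have hPex : ∃ k, ¬ (k < n ∧ ℓ (L.getD k 0) ≤ b) := ⟨n, by simp⟩
  set lo := Nat.find hQex with hlodef
  set hi := Nat.find hPex with hhidef
  have hlo : ∀ k, (k < n ∧ ℓ (L.getD k 0) < a) ↔ k < lo := by
    intro k
    constructor
    · intro hk
      by_contra h
      push_neg at h
      exact Nat.find_spec hQex ⟨lt_of_le_of_lt h hk.1, lt_of_le_of_lt (hmono h hk.1) hk.2⟩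
    · intro h
      have := Nat.find_min hQex h
      tauto
  have hhi : ∀ k, (k < n ∧ ℓ (L.getD k 0) ≤ b) ↔ k < hi := by
    intro k
    constructor
    · intro hk
      by_contra h
      push_neg at h
      exact Nat.find_spec hPex ⟨lt_of_le_of_lt h hk.1, le_trans (hmono h hk.1) hk.2⟩
    · intro h
      have := Nat.find_min hPex h
      tauto
  have h1 : (Finset.range n).filter
        (fun k => a ≤ ℓ (L.getD k 0) ∧ ℓ (L.getD k 0) ≤ b) = Finset.Ico lo hi := by
    ext k
    simp only [Finset.mem_filter, Finset.mem_range, Finset.mem_Ico]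
    constructor
    · rintro ⟨hk, ha, hb⟩
      refine ⟨?_, (hhi k).1 ⟨hk, hb⟩⟩
      by_contra h
      push_neg at h
      have := (hlo k).2 h
      omega
    · rintro ⟨hge, hlt⟩
      have hk := (hhi k).2 hlt
      have hna : ¬ (k < n ∧ ℓ (L.getD k 0) < a) := by
        intro h; exact absurd ((hlo k).1 h) (by omega)
      refine ⟨hk.1, ?_, hk.2⟩
      by_contra h
      push_neg at h
      exact hna ⟨hk.1, h⟩
  refine ⟨lo, hi, h1, ?_, ?_⟩
  · -- part 2 : contiguous chunk
    set m := (Sw S ℓ d w).length with hm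
    set A := (List.range m).filter (fun k => decide ((Sw S ℓ d w).getD k d = c)) with hA
    have hAsub : A.Sublist (List.range m) := List.filter_sublist
    have hAp : A.Pairwise (· ≤ ·) :=
      (List.Pairwise.sublist hAsub (List.pairwise_lt_range (n := m))).imp (fun h => le_of_lt h)
    obtain ⟨r₁, hr₁⟩ := filter_ge_drop lo A hAp
    have hdropP : (A.drop r₁).Pairwise (· ≤ ·) := List.Pairwise.sublist (List.drop_sublist r₁ A) hAp
    obtain ⟨r₂, hr₂⟩ := filter_lt_take hi (A.drop r₁) hdropP
    refine ⟨r₁, r₂, ?_⟩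
    have key : (List.range m).filter
          (fun k => decide ((Sw S ℓ d w).getD k d = c ∧ lo ≤ k ∧ k < hi))
        = (A.filter (fun k => decide (lo ≤ k))).filter (fun k => decide (k < hi)) := by
      rw [hA, List.filter_filter, List.filter_filter]
      apply List.filter_congr
      intro x _
      simp [Bool.and_comm, Bool.and_left_comm, Bool.and_assoc]
    rw [key, hr₁, hr₂]
  · -- part 3 : cardinality
    have hm : (Sw S ℓ d w).length = n := by
      rw [Sw, List.length_map, hn, hL]
    have hSw : ∀ k, k < n → (Sw S ℓ d w).getD k d = S.getD (L.getD k 0 + w.length) d := by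
      intro k hk
      rw [List.getD_eq_getElem _ _ (by rw [hm]; exact hk), List.getD_eq_getElem _ _ hk]
      simp [Sw, ← hL]
    have hLmem : ∀ i, i ∈ L ↔ i < S.length ∧ occursAt S w i := by
      intro i
      rw [hL, sortedOcc, (List.mergeSort_perm _ _).mem_iff]
      simp
    have hNodup : L.Nodup := by
      rw [hL, sortedOcc]
      exact ((List.mergeSort_perm _ _).nodup_iff).2 ((List.nodup_range).filter _)
    rw [← h1, Finset.filter_filter]
    apply Finset.card_bij (fun k _ => L.getD k 0)
    · intro k hk
      simp only [Finset.mem_filter, Finset.mem_range] at hk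
      obtain ⟨hkn, ⟨hla, hlb⟩, hg⟩ := hk
      have hiL : L.getD k 0 ∈ L := by
        rw [List.getD_eq_getElem _ _ hkn]
        exact List.getElem_mem _
      obtain ⟨hiS, hocc⟩ := (hLmem _).1 hiL
      have hg' : S.getD (L.getD k 0 + w.length) d = c := by rw [← hSw k hkn]; exact hg
      have hbnd : L.getD k 0 + w.length < S.length := by
        by_contra h
        push_neg at h
        rw [List.getD_eq_default _ _ h] at hg'
        exact hc hg'.symm
      have hv : S[L.getD k 0 + w.length] = c := by
        rw [← List.getD_eq_getElem _ d hbnd]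
        exact hg'
      simp only [Finset.mem_filter, Finset.mem_range]
      exact ⟨hiS, (occursAt_append_singleton S w c _).2 ⟨hocc, hbnd, hv⟩, hla, hlb⟩
    · intro k₁ h₁ k₂ h₂ heq
      simp only [Finset.mem_filter, Finset.mem_range] at h₁ h₂
      rw [List.getD_eq_getElem _ _ h₁.1, List.getD_eq_getElem _ _ h₂.1] at heq
      exact (hNodup.getElem_inj_iff).1 heq
    · intro i hi'
      simp only [Finset.mem_filter, Finset.mem_range] at hi'
      obtain ⟨hiS, hocc', hla, hlb⟩ := hi'
      obtain ⟨hocc, hbnd, hv⟩ := (occursAt_append_singleton S w c i).1 hocc'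
      have hiL : i ∈ L := (hLmem i).2 ⟨hiS, hocc⟩
      obtain ⟨k, hk, hki⟩ := List.mem_iff_getElem.1 hiL
      have hkn : k < n := hk
      have hgetD : L.getD k 0 = i := by rw [List.getD_eq_getElem _ _ hkn]; exact hki
      refine ⟨k, ?_, hgetD⟩
      simp only [Finset.mem_filter, Finset.mem_range]
      refine ⟨hkn, ⟨by rw [hgetD]; exact hla, by rw [hgetD]; exact hlb⟩, ?_⟩
      rw [hSw k hkn, hgetD, List.getD_eq_getElem _ d hbnd]
      exact hv
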